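/- Let x ∈ P ∩ (ℤ^p × ℝ^q) where P = conv{v^1,...,v^ℓ} + cone{r^1,...,r^m} with all r^j integral vectors. Then there exists a subset K ⊆ {1,...,m} with {r^j : j ∈ K} linearly independent, nonnegative integers μ_j (j ∈ K), and a point b ∈ ℤ^p × ℝ^q of the form b = v + Σ_{j∈K} θ_j r^j with v ∈ conv{v^1,...,v^ℓ} and θ_j ∈ [0,1], such that x = b + Σ_{j∈K} μ_j r^j. -/

import Mathlib

open Finset

/-- Conic Carathéodory: a nonnegative combination over `S` can be rewritten as a
nonnegative combination over a subset with linearly independent vectors. -/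
lemma cone_cara {n m : ℕ} (r : Fin m → (Fin n → ℝ)) (S : Finset (Fin m)) :
    ∀ (c : Fin m → ℝ), (∀ j ∈ S, 0 ≤ c j) →
    ∃ (K : Finset (Fin m)) (d : Fin m → ℝ),
      LinearIndependent ℝ (fun j : K => r (j : Fin m)) ∧ (∀ j ∈ K, 0 ≤ d j) ∧
      ∑ j ∈ S, c j • r j = ∑ j ∈ K, d j • r j := by
  induction S using Finset.strongInduction with
  | _ S ih =>
    intro c hc
    by_cases hli : LinearIndependent ℝ (fun j : S => r (j : Fin m))
    · exact ⟨S, c, hli, hc, rfl⟩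
    · obtain ⟨g, hg0, j1, hj1⟩ := Fintype.not_linearIndependent_iff.mp hli
      -- choose sign so that some coefficient is positive
      set s : ℝ := if 0 < g j1 then 1 else -1 with hs
      have hsne : s ≠ 0 := by
        rcases le_or_gt (g j1) 0 with h | h
        · simp [hs, not_lt.mpr h]
        · simp [hs, h]
      -- extend to a function on `Fin m`
      set g' : Fin m → ℝ := fun j => if h : j ∈ S then s * g ⟨j, h⟩ else 0 with hg'
      have hgsum : ∑ j ∈ S, g' j • r j = 0 := by
        have : ∑ j ∈ S, g' j • r j = s • ∑ i : S, g i • r (i : Fin m) := by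
          rw [Finset.smul_sum, ← Finset.sum_attach S (fun j => g' j • r j)]
          refine Finset.sum_congr rfl fun i _ => ?_
          simp [hg', i.2, mul_smul]
        rw [this, hg0, smul_zero]
      have hj1pos : 0 < g' (j1 : Fin m) := by
        have hmem : (j1 : Fin m) ∈ S := j1.2
        rcases lt_or_ge 0 (g j1) with h | h
        · simp only [hg', dif_pos hmem, hs, if_pos h]
          simpa using h
        · have hlt : g j1 < 0 := lt_of_le_of_ne h hj1
          simp only [hg', dif_pos hmem, hs, if_neg (not_lt.mpr h)]
          have : g ⟨(j1 : Fin m), hmem⟩ = g j1 := by congr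
          rw [this]; linarith
      -- the set of positive coefficients
      set T : Finset (Fin m) := S.filter (fun j => 0 < g' j) with hT
      have hTne : T.Nonempty := ⟨j1, by simp [hT, j1.2, hj1pos]⟩
      obtain ⟨j0, hj0T, hj0min⟩ :=
        Finset.exists_mem_eq_inf' hTne (fun j => c j / g' j)
      have hj0S : j0 ∈ S := (Finset.mem_filter.mp hj0T).1
      have hj0pos : 0 < g' j0 := (Finset.mem_filter.mp hj0T).2
      set t : ℝ := c j0 / g' j0 with ht
      have htmin : ∀ j ∈ T, t ≤ c j / g' j := by
        intro j hj; rw [← hj0min]; exact Finset.inf'_le _ hj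
      have htnonneg : 0 ≤ t := div_nonneg (hc j0 hj0S) hj0pos.le
      set c' : Fin m → ℝ := fun j => c j - t * g' j with hc'
      have hc'nonneg : ∀ j ∈ S, 0 ≤ c' j := by
        intro j hjS
        rcases le_or_gt (g' j) 0 with h | h
        · have : t * g' j ≤ 0 := mul_nonpos_of_nonneg_of_nonpos htnonneg h
          have := hc j hjS; simp only [hc']; linarith
        · have hjT : j ∈ T := Finset.mem_filter.mpr ⟨hjS, h⟩
          have h2 : t * g' j ≤ c j := by
            rw [ht, div_mul_eq_mul_div, div_le_iff₀ hj0pos]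
            have h3 := htmin j hjT
            rw [ht, div_le_div_iff₀ hj0pos h] at h3
            linarith
          simp only [hc']; linarith
      have hc'j0 : c' j0 = 0 := by
        simp only [hc', ht]
        field_simp
        ring
      have hsumeq : ∑ j ∈ S, c j • r j = ∑ j ∈ S.erase j0, c' j • r j := by
        have h1 : ∑ j ∈ S, c' j • r j
            = ∑ j ∈ S, c j • r j - t • ∑ j ∈ S, g' j • r j := by
          rw [Finset.smul_sum, ← Finset.sum_sub_distrib]
          refine Finset.sum_congr rfl fun j _ => ?_
          simp [hc', sub_smul, mul_smul]
        have h2 : ∑ j ∈ S, c' j • r j = ∑ j ∈ S.erase j0, c' j • r j := by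
          rw [← Finset.sum_erase_add _ _ hj0S, hc'j0]
          simp
        rw [← h2, h1, hgsum, smul_zero, sub_zero]
      obtain ⟨K, d, hK1, hK2, hK3⟩ :=
        ih (S.erase j0) (Finset.erase_ssubset hj0S) c'
          (fun j hj => hc'nonneg j (Finset.mem_of_mem_erase hj))
      exact ⟨K, d, hK1, hK2, by rw [hsumeq, hK3]⟩

/-- Decomposition of a mixed-integer point of a polyhedron. -/
theorem stmt2 (p q ℓ m : ℕ) (v : Fin ℓ → (Fin (p + q) → ℝ))
    (r : Fin m → (Fin (p + q) → ℝ))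
    (hrint : ∀ j i, ∃ z : ℤ, r j i = (z : ℝ))
    (x : Fin (p + q) → ℝ)
    (hxP : ∃ (w : Fin (p + q) → ℝ) (ν : Fin m → ℝ),
      w ∈ convexHull ℝ (Set.range v) ∧ (∀ j, 0 ≤ ν j) ∧ x = w + ∑ j, ν j • r j)
    (hxmixed : ∀ i : Fin (p + q), (i : ℕ) < p → ∃ z : ℤ, x i = (z : ℝ)) :
    ∃ (K : Finset (Fin m)) (μ : Fin m → ℕ) (b w : Fin (p + q) → ℝ) (θ : Fin m → ℝ),
      LinearIndependent ℝ (fun j : K => r (j : Fin m)) ∧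
      w ∈ convexHull ℝ (Set.range v) ∧
      (∀ j ∈ K, θ j ∈ Set.Icc (0 : ℝ) 1) ∧
      b = w + ∑ j ∈ K, θ j • r j ∧
      (∀ i : Fin (p + q), (i : ℕ) < p → ∃ z : ℤ, b i = (z : ℝ)) ∧
      x = b + ∑ j ∈ K, (μ j : ℝ) • r j := by
  obtain ⟨w, ν, hw, hν, hx⟩ := hxP
  obtain ⟨K, d, hKli, hd, hsum⟩ :=
    cone_cara r Finset.univ ν (fun j _ => hν j)
  set μ : Fin m → ℕ := fun j => ⌊d j⌋₊ with hμ
  set θ : Fin m → ℝ := fun j => d j - (μ j : ℝ) with hθ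
  set b : Fin (p + q) → ℝ := w + ∑ j ∈ K, θ j • r j with hb
  have hθIcc : ∀ j ∈ K, θ j ∈ Set.Icc (0 : ℝ) 1 := by
    intro j hj
    have h0 := hd j hj
    constructor
    · simp only [hθ, hμ, sub_nonneg]
      exact Nat.floor_le h0
    · simp only [hθ, hμ]
      have := Nat.lt_floor_add_one (d j)
      linarith
  have hdsplit : ∀ j ∈ K, d j = θ j + (μ j : ℝ) := by
    intro j _; simp [hθ]
  have hxb : x = b + ∑ j ∈ K, (μ j : ℝ) • r j := by
    rw [hx, hsum, hb, add_assoc, ← Finset.sum_add_distrib]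
    congr 1
    refine Finset.sum_congr rfl fun j hj => ?_
    rw [← add_smul]
    congr 1
    exact hdsplit j hj
  have hbint : ∀ i : Fin (p + q), (i : ℕ) < p → ∃ z : ℤ, b i = (z : ℝ) := by
    intro i hi
    obtain ⟨zx, hzx⟩ := hxmixed i hi
    have hbi : b i = x i - ∑ j ∈ K, (μ j : ℝ) * r j i := by
      have := congrFun hxb i
      simp only [Pi.add_apply, Finset.sum_apply, Pi.smul_apply, smul_eq_mul] at this
      linarith [this]
    refine ⟨zx - ∑ j ∈ K, (μ j : ℤ) * (hrint j i).choose, ?_⟩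
    rw [hbi, hzx]
    push_cast
    congr 1
    exact Finset.sum_congr rfl fun j _ =>
      congrArg (fun y => ((μ j : ℝ)) * y) (hrint j i).choose_spec
  exact ⟨K, μ, b, w, θ, hKli, hw, hθIcc, hb, hbint, hxb⟩
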